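/- arXiv:1709.07086 — 3 statements merged into one kernel-verified Lean document; each statement's English description precedes it below -/
import Mathlib

section
/- Let 0 → X →f E →g Y → 0 be a non-split short exact sequence of finitely generated A-modules with X indecomposable. Then for every direct sum decomposition E = E₁ ⊕ E₂ with E₁ nonzero, the coordinate morphism g∘ι₁ : E₁ → Y (the restriction of g to the summand E₁) is nonzero. -/
/-! Common definitions: modules over an Artin algebra, indecomposability,
projective/injective dimension bounds, paths, torsion(-free) classes, length. -/

/-- A module is indecomposable if it is nonzero and admits no direct sum
decomposition into two nonzero modules. -/
def IsIndec (A : Type) [Ring A] (M : ModuleCat.{0} A) : Prop :=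
  Nontrivial M ∧ ∀ N₁ N₂ : ModuleCat.{0} A, Nontrivial N₁ → Nontrivial N₂ →
    IsEmpty (↥M ≃ₗ[A] ↥N₁ × ↥N₂)

/-- `pdLE A n M` : the module `M` has projective dimension at most `n`. -/
def pdLE (A : Type) [Ring A] : ℕ → ModuleCat.{0} A → Prop
  | 0, M => Module.Projective A M
  | n + 1, M => ∃ (P : ModuleCat.{0} A) (f : ↥P →ₗ[A] ↥M),
      Module.Projective A ↥P ∧ Function.Surjective f ∧
      pdLE A n (ModuleCat.of A ↥(LinearMap.ker f))

/-- `idLE A n M` : the module `M` has injective dimension at most `n`. -/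
def idLE (A : Type) [Ring A] : ℕ → ModuleCat.{0} A → Prop
  | 0, M => Module.Injective A M
  | n + 1, M => ∃ (I : ModuleCat.{0} A) (f : ↥M →ₗ[A] ↥I),
      Module.Injective A ↥I ∧ Function.Injective f ∧
      idLE A n (ModuleCat.of A (↥I ⧸ LinearMap.range f))

/-- The (composition) length of a module, as the Krull dimension of its
submodule lattice (for finite length modules this is the usual length). -/
noncomputable def modLength (A : Type) [Ring A] (M : ModuleCat.{0} A) : WithBot ℕ∞ :=
  Order.krullDim (Submodule A ↥M)

/-- A torsion-free class: a class of finitely generated modules containing `0`,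
closed under isomorphisms, submodules and extensions. -/
structure IsTorsionFreeClass (A : Type) [Ring A] (C : Set (ModuleCat.{0} A)) : Prop where
  fg : ∀ M ∈ C, Module.Finite A ↥M
  zero_mem : ModuleCat.of A PUnit ∈ C
  iso_closed : ∀ M N : ModuleCat.{0} A, M ∈ C → Nonempty (↥M ≃ₗ[A] ↥N) → N ∈ C
  sub_closed : ∀ M ∈ C, ∀ S : Submodule A ↥M, ModuleCat.of A ↥S ∈ C
  ext_closed : ∀ (X E Y : ModuleCat.{0} A), X ∈ C → Y ∈ C →
    ∀ (f : ↥X →ₗ[A] ↥E) (g : ↥E →ₗ[A] ↥Y), Function.Injective f →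
      Function.Surjective g → LinearMap.range f = LinearMap.ker g → E ∈ C

/-- A torsion class: a class of finitely generated modules containing `0`,
closed under isomorphisms, quotient modules and extensions. -/
structure IsTorsionClass (A : Type) [Ring A] (C : Set (ModuleCat.{0} A)) : Prop where
  fg : ∀ M ∈ C, Module.Finite A ↥M
  zero_mem : ModuleCat.of A PUnit ∈ C
  iso_closed : ∀ M N : ModuleCat.{0} A, M ∈ C → Nonempty (↥M ≃ₗ[A] ↥N) → N ∈ C
  quot_closed : ∀ M ∈ C, ∀ S : Submodule A ↥M, ModuleCat.of A (↥M ⧸ S) ∈ C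
  ext_closed : ∀ (X E Y : ModuleCat.{0} A), X ∈ C → Y ∈ C →
    ∀ (f : ↥X →ₗ[A] ↥E) (g : ↥E →ₗ[A] ↥Y), Function.Injective f →
      Function.Surjective g → LinearMap.range f = LinearMap.ker g → E ∈ C

/-- One step of a path in `ind A`: a nonzero morphism between finitely
generated indecomposable modules. -/
def PathStep (A : Type) [Ring A] (X Y : ModuleCat.{0} A) : Prop :=
  IsIndec A X ∧ Module.Finite A ↥X ∧ IsIndec A Y ∧ Module.Finite A ↥Y ∧
    ∃ f : ↥X →ₗ[A] ↥Y, f ≠ 0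

/-- `Y` is a predecessor of `X` in `ind A`: `Y` is finitely generated and
indecomposable, and there is a path (possibly of length `0`) from `Y` to `X`. -/
def IsPredecessor (A : Type) [Ring A] (Y X : ModuleCat.{0} A) : Prop :=
  IsIndec A Y ∧ Module.Finite A ↥Y ∧ Relation.ReflTransGen (PathStep A) Y X

/-- `Z` is a successor of `X` in `ind A`: `Z` is finitely generated and
indecomposable, and there is a path (possibly of length `0`) from `X` to `Z`. -/
def IsSuccessor (A : Type) [Ring A] (Z X : ModuleCat.{0} A) : Prop :=
  IsIndec A Z ∧ Module.Finite A ↥Z ∧ Relation.ReflTransGen (PathStep A) X Z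

/-- In a non-split short exact sequence `0 → X → E → Y → 0` of
finitely generated modules over an Artin algebra with `X` indecomposable,
for every direct sum decomposition `E ≅ E₁ ⊕ E₂` with `E₁` nonzero, the
coordinate morphism `g ∘ ι₁ : E₁ → Y` is nonzero. -/
theorem stmt0 (k : Type) [CommRing k] [IsArtinianRing k]
    (A : Type) [Ring A] [Algebra k A] [Module.Finite k A]
    (X E Y : ModuleCat.{0} A)
    (hXfg : Module.Finite A ↥X) (hEfg : Module.Finite A ↥E) (hYfg : Module.Finite A ↥Y)
    (f : ↥X →ₗ[A] ↥E) (g : ↥E →ₗ[A] ↥Y)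
    (hf : Function.Injective f) (hg : Function.Surjective g)
    (hexact : LinearMap.range f = LinearMap.ker g)
    (hnonsplit : ¬ ∃ s : ↥Y →ₗ[A] ↥E, g ∘ₗ s = LinearMap.id)
    (hX : IsIndec A X)
    (E₁ E₂ : ModuleCat.{0} A) (e : ↥E ≃ₗ[A] ↥E₁ × ↥E₂) (hE₁ : Nontrivial ↥E₁) :
    g ∘ₗ (e.symm.toLinearMap ∘ₗ LinearMap.inl A ↥E₁ ↥E₂) ≠ 0 := by
  intro h
  apply hnonsplit
  -- pointwise form of h
  have h1 : ∀ a : ↥E₁, g (e.symm (a, 0)) = 0 := by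
    intro a
    simpa using LinearMap.congr_fun h a
  have memrange : ∀ z : ↥E₁ × ↥E₂, g (e.symm z) = 0 → ∃ x, f x = e.symm z := by
    intro z hz
    have : e.symm z ∈ LinearMap.ker g := hz
    rw [← hexact] at this
    exact this
  set f' : ↥X →ₗ[A] ↥E₁ × ↥E₂ := e.toLinearMap ∘ₗ f with hf'def
  have hf'x : ∀ x : ↥X, f' x = e (f x) := fun x => rfl
  set P : Submodule A ↥X := LinearMap.ker ((LinearMap.snd A ↥E₁ ↥E₂) ∘ₗ f') with hPdef
  set Q : Submodule A ↥X := LinearMap.ker ((LinearMap.fst A ↥E₁ ↥E₂) ∘ₗ f') with hQdef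
  have memP : ∀ x : ↥X, x ∈ P ↔ (e (f x)).2 = 0 := fun x => Iff.rfl
  have memQ : ∀ x : ↥X, x ∈ Q ↔ (e (f x)).1 = 0 := fun x => Iff.rfl
  -- the first coordinate submodule lies in range f
  have hfst : ∀ a : ↥E₁, ∃ x, f x = e.symm (a, 0) := fun a => memrange _ (h1 a)
  -- disjointness
  have hdisj : P ⊓ Q = ⊥ := by
    apply le_bot_iff.mp
    intro x hx
    have h2 : (e (f x)).2 = 0 := (memP x).mp hx.1
    have h3 : (e (f x)).1 = 0 := (memQ x).mp hx.2
    have : e (f x) = 0 := Prod.ext h3 h2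
    have : f x = 0 := by
      have := congrArg e.symm this
      simpa using this
    have : f x = f 0 := by simpa using this
    simpa using hf this
  have hsup : P ⊔ Q = ⊤ := by
    rw [eq_top_iff]
    intro x _
    obtain ⟨x₁, hx₁⟩ := hfst (e (f x)).1
    refine Submodule.mem_sup.mpr ⟨x₁, ?_, x - x₁, ?_, by abel⟩
    · rw [memP, hx₁]
      simp
    · rw [memQ]
      have : e (f (x - x₁)) = e (f x) - e (f x₁) := by simp
      rw [this, hx₁]
      simp
  have hcompl : IsCompl P Q := ⟨disjoint_iff.mpr hdisj, codisjoint_iff.mpr hsup⟩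
  -- P is nontrivial
  have hPnt : Nontrivial ↥P := by
    obtain ⟨a, ha⟩ := exists_ne (0 : ↥E₁)
    obtain ⟨x, hx⟩ := hfst a
    have hxP : x ∈ P := by
      rw [memP, hx]; simp
    refine ⟨⟨x, hxP⟩, 0, ?_⟩
    intro hcon
    apply ha
    have hx0 : x = 0 := by simpa using congrArg Subtype.val hcon
    have h5 : e (f x) = (a, 0) := by rw [hx]; simp
    rw [hx0] at h5
    simp only [map_zero] at h5
    have := congrArg Prod.fst h5
    simpa using this.symm
  -- Q is trivial, else X decomposes
  have hQtriv : ∀ x ∈ Q, x = 0 := by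
    by_contra hcon
    push_neg at hcon
    obtain ⟨x, hxQ, hx0⟩ := hcon
    have hQnt : Nontrivial ↥Q := ⟨⟨x, hxQ⟩, 0, fun hc => hx0 (by simpa using congrArg Subtype.val hc)⟩
    exact (hX.2 (ModuleCat.of A ↥P) (ModuleCat.of A ↥Q) hPnt hQnt).false
      (Submodule.prodEquivOfIsCompl P Q hcompl).symm
  -- build the splitting via g'' : E₂ → Y
  set g'' : ↥E₂ →ₗ[A] ↥Y := g ∘ₗ (e.symm.toLinearMap ∘ₗ LinearMap.inr A ↥E₁ ↥E₂) with hg''def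
  have hg''x : ∀ b : ↥E₂, g'' b = g (e.symm (0, b)) := fun b => rfl
  have hg''inj : Function.Injective g'' := by
    rw [injective_iff_map_eq_zero]
    intro b hb
    rw [hg''x] at hb
    obtain ⟨x, hx⟩ := memrange (0, b) hb
    have hxQ : x ∈ Q := by
      rw [memQ, hx]
      simp
    have hx0 := hQtriv x hxQ
    rw [hx0] at hx
    have h6 : ((0 : ↥E₁), b) = 0 := by
      have := congrArg e hx
      simpa using this.symm
    have := congrArg Prod.snd h6
    simpa using this
  have hg''surj : Function.Surjective g'' := by
    intro y
    obtain ⟨z, hz⟩ := hg y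
    refine ⟨(e z).2, ?_⟩
    rw [hg''x]
    have hz' : e.symm (e z) = z := e.symm_apply_apply z
    have hdec : (e z) = ((e z).1, (0 : ↥E₂)) + ((0 : ↥E₁), (e z).2) := by simp
    calc g (e.symm (0, (e z).2))
        = g (e.symm ((e z).1, 0)) + g (e.symm (0, (e z).2)) := by rw [h1]; simp
      _ = g (e.symm (((e z).1, (0 : ↥E₂)) + ((0 : ↥E₁), (e z).2))) := by
          rw [map_add, map_add]
      _ = g z := by rw [← hdec, hz']
      _ = y := hz
  set E₂Y : ↥E₂ ≃ₗ[A] ↥Y := LinearEquiv.ofBijective g'' ⟨hg''inj, hg''surj⟩ with hE₂Y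
  refine ⟨e.symm.toLinearMap ∘ₗ (LinearMap.inr A ↥E₁ ↥E₂) ∘ₗ E₂Y.symm.toLinearMap, ?_⟩
  ext y
  have : g'' (E₂Y.symm y) = y := E₂Y.apply_symm_apply y
  simpa [hg''x] using this
end

section
/- Let 0 → X →f E →g Y → 0 be a non-split short exact sequence of finitely generated A-modules with Y indecomposable. Then for every direct sum decomposition E = E₁ ⊕ E₂ with E₁ nonzero, the coordinate morphism π₁∘f : X → E₁ (the composition of f with the projection onto E₁) is nonzero. -/
/-- In a non-split short exact sequence `0 → X → E → Y → 0` of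
finitely generated modules over an Artin algebra with `Y` indecomposable,
for every direct sum decomposition `E ≅ E₁ ⊕ E₂` with `E₁` nonzero, the
coordinate morphism `π₁ ∘ f : X → E₁` is nonzero. -/
theorem stmt1 (k : Type) [CommRing k] [IsArtinianRing k]
    (A : Type) [Ring A] [Algebra k A] [Module.Finite k A]
    (X E Y : ModuleCat.{0} A)
    (hXfg : Module.Finite A ↥X) (hEfg : Module.Finite A ↥E) (hYfg : Module.Finite A ↥Y)
    (f : ↥X →ₗ[A] ↥E) (g : ↥E →ₗ[A] ↥Y)
    (hf : Function.Injective f) (hg : Function.Surjective g)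
    (hexact : LinearMap.range f = LinearMap.ker g)
    (hnonsplit : ¬ ∃ s : ↥Y →ₗ[A] ↥E, g ∘ₗ s = LinearMap.id)
    (hY : IsIndec A Y)
    (E₁ E₂ : ModuleCat.{0} A) (e : ↥E ≃ₗ[A] ↥E₁ × ↥E₂) (hE₁ : Nontrivial ↥E₁) :
    LinearMap.fst A ↥E₁ ↥E₂ ∘ₗ (e.toLinearMap ∘ₗ f) ≠ 0 := by
  intro h0
  set f₂ : ↥X →ₗ[A] ↥E₂ := LinearMap.snd A ↥E₁ ↥E₂ ∘ₗ (e.toLinearMap ∘ₗ f) with hf₂def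
  have hef : ∀ x : ↥X, e (f x) = (0, f₂ x) := by
    intro x
    have h1 : (LinearMap.fst A ↥E₁ ↥E₂ ∘ₗ (e.toLinearMap ∘ₗ f)) x = 0 := by
      rw [h0]; rfl
    exact Prod.ext h1 rfl
  set K := LinearMap.range f₂ with hKdef
  -- Step 1: f₂ is surjective, using indecomposability of Y
  have hKtop : K = ⊤ := by
    by_contra hKt
    set θ : ↥E →ₗ[A] ↥E₁ × (↥E₂ ⧸ K) :=
      (LinearMap.prodMap LinearMap.id K.mkQ) ∘ₗ e.toLinearMap with hθdef
    have hθsurj : Function.Surjective θ := by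
      intro p
      obtain ⟨b, hb⟩ := K.mkQ_surjective p.2
      refine ⟨e.symm (p.1, b), ?_⟩
      simp [hθdef, hb]
    have hker : LinearMap.ker g = LinearMap.ker θ := by
      ext w
      constructor
      · intro hw
        have : w ∈ LinearMap.range f := hexact ▸ hw
        obtain ⟨x, rfl⟩ := this
        have : θ (f x) = (0, K.mkQ (f₂ x)) := by
          simp [hθdef, hef x]
        rw [LinearMap.mem_ker, this]
        have : K.mkQ (f₂ x) = 0 := (Submodule.Quotient.mk_eq_zero K).mpr ⟨x, rfl⟩
        rw [this]
        rfl
      · intro hw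
        have hw' : θ w = 0 := hw
        have h1 : (e w).1 = 0 := congrArg Prod.fst hw'
        have h2 : K.mkQ (e w).2 = 0 := congrArg Prod.snd hw'
        have h2' : (e w).2 ∈ K := (Submodule.Quotient.mk_eq_zero K).mp h2
        obtain ⟨x, hx⟩ := h2'
        have : e w = e (f x) := by
          rw [hef x]; exact Prod.ext h1 hx.symm
        have hwf : w = f x := e.injective this
        have : w ∈ LinearMap.range f := ⟨x, hwf.symm⟩
        exact hexact ▸ this
    have equivY : ↥Y ≃ₗ[A] ↥E₁ × (↥E₂ ⧸ K) :=
      ((g.quotKerEquivOfSurjective hg).symm.trans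
        (Submodule.quotEquivOfEq _ _ hker)).trans
        (θ.quotKerEquivOfSurjective hθsurj)
    have hq : Nontrivial (↥E₂ ⧸ K) :=
      (Submodule.Quotient.nontrivial_iff (p := K)).mpr (lt_top_iff_ne_top.mpr hKt).ne
    exact (hY.2 (ModuleCat.of A ↥E₁) (ModuleCat.of A (↥E₂ ⧸ K)) hE₁ hq).false equivY
  have hf₂surj : Function.Surjective f₂ := LinearMap.range_eq_top.mp hKtop
  -- Step 2: build a splitting, contradicting hnonsplit
  set φ : ↥E₁ →ₗ[A] ↥Y := g ∘ₗ (e.symm.toLinearMap ∘ₗ LinearMap.inl A ↥E₁ ↥E₂) with hφdef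
  have hφbij : Function.Bijective φ := by
    constructor
    · rw [injective_iff_map_eq_zero]
      intro a ha
      have : e.symm (a, 0) ∈ LinearMap.ker g := ha
      have : e.symm (a, 0) ∈ LinearMap.range f := hexact ▸ this
      obtain ⟨x, hx⟩ := this
      have : (a, (0 : ↥E₂)) = (0, f₂ x) := by
        rw [← hef x, hx, e.apply_symm_apply]
      exact (congrArg Prod.fst this)
    · intro y
      obtain ⟨w, hw⟩ := hg y
      obtain ⟨x, hx⟩ := hf₂surj (e w).2
      refine ⟨(e w).1, ?_⟩
      have he1 : e (w - f x) = ((e w).1, 0) := by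
        rw [map_sub, hef x, hx]
        exact Prod.ext (by simp) (by simp)
      have : e.symm ((e w).1, 0) = w - f x := by
        rw [← he1, e.symm_apply_apply]
      have hgfx : g (f x) = 0 := by
        have : f x ∈ LinearMap.ker g := hexact ▸ LinearMap.mem_range_self f x
        exact this
      calc φ (e w).1 = g (e.symm ((e w).1, 0)) := rfl
        _ = g (w - f x) := by rw [this]
        _ = y := by rw [map_sub, hgfx, hw, sub_zero]
  set φe := LinearEquiv.ofBijective φ hφbij with hφe
  refine hnonsplit ⟨(e.symm.toLinearMap ∘ₗ LinearMap.inl A ↥E₁ ↥E₂) ∘ₗ φe.symm.toLinearMap, ?_⟩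
  ext y
  have : φ (φe.symm y) = y := φe.apply_symm_apply y
  simpa [hφdef, LinearMap.comp_apply] using this
end

section
/- Let C be a torsion-free class in mod A and assume that every indecomposable projective finitely generated A-module belongs to L_C, i.e. every predecessor in ind A of an indecomposable projective module lies in C. Then every indecomposable finitely generated A-module X satisfies X ∈ C or id X ≤ 1. -/
section Akizuki
variable {k : Type} [CommRing k] [IsArtinianRing k]

private lemma aux_noeth_step (J : Ideal k) (hrad : J.IsRadical) (m : ℕ)
    (ih : IsNoetherian k ↥(J ^ (m + 1) : Ideal k)) :
    IsNoetherian k ↥(J ^ m : Ideal k) := by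
  have hle : (J ^ (m + 1) : Ideal k) ≤ J ^ m := Ideal.pow_le_pow_right (Nat.le_succ m)
  let Jm : Ideal k := J ^ m
  let P : Submodule k ↥Jm := Submodule.comap Jm.subtype (J ^ (m + 1))
  haveI hPnoeth : IsNoetherian k ↥P :=
    isNoetherian_of_linearEquiv (Submodule.comapSubtypeEquivOfLe hle).symm
  have htor : Module.IsTorsionBySet k (↥Jm ⧸ P) (J : Set k) := by
    rw [Module.isTorsionBySet_quotient_iff]
    intro x r hr
    show r • x ∈ P
    rw [Submodule.mem_comap]
    show Jm.subtype (r • x) ∈ J ^ (m + 1)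
    rw [map_smul, Submodule.coe_subtype, smul_eq_mul, pow_succ']
    exact Ideal.mul_mem_mul hr x.2
  letI : Module (k ⧸ J) (↥Jm ⧸ P) := htor.module
  haveI : IsScalarTower k (k ⧸ J) (↥Jm ⧸ P) := htor.isScalarTower
  haveI : IsReduced (k ⧸ J) := (Ideal.isRadical_iff_quotient_reduced J).mp hrad
  haveI : IsSemisimpleRing (k ⧸ J) := IsArtinianRing.isSemisimpleRing_of_isReduced (k ⧸ J)
  have hartk : IsArtinian k (↥Jm ⧸ P) := inferInstance
  have hart : IsArtinian (k ⧸ J) (↥Jm ⧸ P) := isArtinian_of_tower k hartk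
  have hnoe' : IsNoetherian (k ⧸ J) (↥Jm ⧸ P) :=
    (IsSemisimpleModule.finite_tfae.out 2 1).mp hart
  have hnoeQ : IsNoetherian k (↥Jm ⧸ P) := by
    let φ : Submodule k (↥Jm ⧸ P) → Submodule (k ⧸ J) (↥Jm ⧸ P) := fun L =>
      { carrier := L
        add_mem' := fun h1 h2 => L.add_mem h1 h2
        zero_mem' := L.zero_mem
        smul_mem' := by
          rintro c x hx
          obtain ⟨r, rfl⟩ := Ideal.Quotient.mk_surjective c
          exact L.smul_mem r hx }
    have hcoe : ∀ L, (φ L : Set (↥Jm ⧸ P)) = L := fun L => rfl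
    let φo : Submodule k (↥Jm ⧸ P) ↪o Submodule (k ⧸ J) (↥Jm ⧸ P) :=
      { toFun := φ
        inj' := fun L1 L2 h => by
          apply SetLike.coe_injective
          rw [← hcoe L1, ← hcoe L2, h]
        map_rel_iff' := Iff.rfl }
    exact isNoetherian_mk ⟨φo.dual.wellFounded (isNoetherian_iff'.mp hnoe').wf⟩
  exact isNoetherian_of_range_eq_ker P.subtype P.mkQ
    (by rw [Submodule.range_subtype, Submodule.ker_mkQ])

lemma aux_akizuki : IsNoetherianRing k := by
  obtain ⟨n, hn⟩ := IsArtinianRing.isNilpotent_jacobson_bot (R := k)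
  have hrad : ((⊥ : Ideal k).jacobson).IsRadical := Ideal.isRadical_jacobson ⊥
  set J := (⊥ : Ideal k).jacobson with hJ
  have key : ∀ i, IsNoetherian k ↥(J ^ (n - i) : Ideal k) := by
    intro i
    induction i with
    | zero =>
      simp only [Nat.sub_zero]
      show IsNoetherian k ↥(J ^ n : Ideal k); rw [hn, Submodule.zero_eq_bot]
      exact isNoetherian_of_linearEquiv (Submodule.botEquivPUnit : (⊥ : Ideal k) ≃ₗ[k] PUnit.{1}).symm
    | succ i ih =>
      rcases le_or_gt n i with h | h
      · have heq : n - (i + 1) = n - i := by omega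
        rw [heq]; exact ih
      · have h2 : n - i = (n - (i + 1)) + 1 := by omega
        rw [h2] at ih
        exact aux_noeth_step J hrad _ ih
    
  have hfin := key n
  have heq : (J ^ (n - n) : Ideal k) = ⊤ := by
    rw [Nat.sub_self, pow_zero, Ideal.one_eq_top]
  rw [heq] at hfin
  exact isNoetherian_top_iff.mp hfin

end Akizuki

/-- In an artinian module `E`, given `h : X →ₗ E` nonzero, there is an indecomposable
direct summand `Z` of `E` such that the component of `h` in `Z` is nonzero. -/
theorem findIndecSummand (A : Type) [Ring A] (E : ModuleCat.{0} A)
    (hart : IsArtinian A ↥E)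
    (X : ModuleCat.{0} A) (h : ↥X →ₗ[A] ↥E) (hh : h ≠ 0) :
    ∃ (Z : ModuleCat.{0} A) (ι : ↥Z →ₗ[A] ↥E) (π : ↥E →ₗ[A] ↥Z),
      IsIndec A Z ∧ π.comp ι = LinearMap.id ∧ π.comp h ≠ 0 := by
  suffices H : ∀ (S : Submodule A ↥E) (W : ModuleCat.{0} A) (ι : ↥W →ₗ[A] ↥E)
      (π : ↥E →ₗ[A] ↥W), LinearMap.range ι = S → π.comp ι = LinearMap.id →
      π.comp h ≠ 0 → ∃ (Z : ModuleCat.{0} A) (ι' : ↥Z →ₗ[A] ↥E) (π' : ↥E →ₗ[A] ↥Z),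
      IsIndec A Z ∧ π'.comp ι' = LinearMap.id ∧ π'.comp h ≠ 0 by
    refine H ⊤ E LinearMap.id LinearMap.id ?_ ?_ ?_
    · exact LinearMap.range_id
    · exact LinearMap.id_comp _
    · rw [LinearMap.id_comp]; exact hh
  haveI : WellFoundedLT (Submodule A ↥E) := hart
  intro S
  induction S using WellFoundedLT.induction with
  | ind S IH =>
  intro W ι π hrange hsec hne
  by_cases hW : IsIndec A W
  · exact ⟨W, ι, π, hW, hsec, hne⟩
  have hpoint : ∀ w, π (ι w) = w := fun w => LinearMap.congr_fun hsec w
  have hιinj : Function.Injective ι := by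
    intro a b hab
    rw [← hpoint a, hab, hpoint b]
  have hnt : Nontrivial ↥W := by
    obtain ⟨x, hx⟩ : ∃ x, (π.comp h) x ≠ 0 := by
      by_contra hall
      push_neg at hall
      exact hne (LinearMap.ext hall)
    exact nontrivial_of_ne _ _ hx
  have hdec : ∃ N₁ N₂ : ModuleCat.{0} A, Nontrivial ↥N₁ ∧ Nontrivial ↥N₂ ∧
      Nonempty (↥W ≃ₗ[A] ↥N₁ × ↥N₂) := by
    by_contra hno
    push_neg at hno
    refine hW ⟨hnt, fun N₁ N₂ h1 h2 => ?_⟩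
    exact hno N₁ N₂ h1 h2
  obtain ⟨N₁, N₂, hnt1, hnt2, ⟨e⟩⟩ := hdec
  -- components
  set ι₁ : ↥N₁ →ₗ[A] ↥E := ι.comp (e.symm.toLinearMap.comp (LinearMap.inl A ↥N₁ ↥N₂)) with hι₁
  set π₁ : ↥E →ₗ[A] ↥N₁ := (LinearMap.fst A ↥N₁ ↥N₂).comp (e.toLinearMap.comp π) with hπ₁
  set ι₂ : ↥N₂ →ₗ[A] ↥E := ι.comp (e.symm.toLinearMap.comp (LinearMap.inr A ↥N₁ ↥N₂)) with hι₂
  set π₂ : ↥E →ₗ[A] ↥N₂ := (LinearMap.snd A ↥N₁ ↥N₂).comp (e.toLinearMap.comp π) with hπ₂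
  have hsec₁ : π₁.comp ι₁ = LinearMap.id := by
    ext x
    simp [hι₁, hπ₁, hpoint]
  have hsec₂ : π₂.comp ι₂ = LinearMap.id := by
    ext x
    simp [hι₂, hπ₂, hpoint]
  have hlt : ∀ (y : ↥N₂), y ≠ 0 → LinearMap.range ι₁ < S := by
    intro y hy
    rw [← hrange]
    constructor
    · rintro _ ⟨x, rfl⟩
      exact ⟨e.symm (x, 0), rfl⟩
    · intro hsub
      have hu : ι (e.symm (0, y)) ∈ LinearMap.range ι₁ := hsub ⟨e.symm (0, y), rfl⟩
      obtain ⟨x, hx⟩ := hu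
      have : e.symm (x, 0) = e.symm (0, y) := hιinj hx
      have h2 := e.symm.injective this
      have : (0 : ↥N₂) = y := congrArg Prod.snd h2
      exact hy this.symm
  have hlt' : ∀ (y : ↥N₁), y ≠ 0 → LinearMap.range ι₂ < S := by
    intro y hy
    rw [← hrange]
    constructor
    · rintro _ ⟨x, rfl⟩
      exact ⟨e.symm (0, x), rfl⟩
    · intro hsub
      have hu : ι (e.symm (y, 0)) ∈ LinearMap.range ι₂ := hsub ⟨e.symm (y, 0), rfl⟩
      obtain ⟨x, hx⟩ := hu
      have : e.symm (0, x) = e.symm (y, 0) := hιinj hx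
      have h2 := e.symm.injective this
      have : (0 : ↥N₁) = y := congrArg Prod.fst h2
      exact hy this.symm
  by_cases hc1 : π₁.comp h = 0
  · -- then π₂.comp h ≠ 0
    have hne2 : π₂.comp h ≠ 0 := by
      intro hc2
      apply hne
      ext x
      have h1 : (e ((π.comp h) x)).1 = 0 := LinearMap.congr_fun hc1 x
      have h2 : (e ((π.comp h) x)).2 = 0 := LinearMap.congr_fun hc2 x
      have : e ((π.comp h) x) = 0 := Prod.ext h1 h2
      have := congrArg e.symm this
      simpa using this
    obtain ⟨y, hy⟩ := exists_ne (0 : ↥N₁)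
    exact IH (LinearMap.range ι₂) (hlt' y hy) N₂ ι₂ π₂ rfl hsec₂ hne2
  · obtain ⟨y, hy⟩ := exists_ne (0 : ↥N₂)
    exact IH (LinearMap.range ι₁) (hlt y hy) N₁ ι₁ π₁ rfl hsec₁ hc1

/-- Main step: a non-split exact sequence `0 → X → E → N → 0` with `X` indecomposable
yields an indecomposable summand `Z` of `E` with nonzero maps `X → Z` and `Z → N`. -/
theorem mainStep (A : Type) [Ring A] (X E N : ModuleCat.{0} A)
    (hart : IsArtinian A ↥E) (hX : IsIndec A X)
    (f : ↥X →ₗ[A] ↥E) (g : ↥E →ₗ[A] ↥N)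
    (hf : Function.Injective f) (hg : Function.Surjective g)
    (hexact : LinearMap.range f = LinearMap.ker g)
    (hns : ∀ s : ↥N →ₗ[A] ↥E, g.comp s ≠ LinearMap.id) :
    ∃ Z : ModuleCat.{0} A, IsIndec A Z ∧
      (∃ π : ↥E →ₗ[A] ↥Z, Function.Surjective π) ∧
      (∃ u : ↥X →ₗ[A] ↥Z, u ≠ 0) ∧ (∃ v : ↥Z →ₗ[A] ↥N, v ≠ 0) := by
  have hf0 : f ≠ 0 := by
    haveI := hX.1
    obtain ⟨x, hx⟩ := exists_ne (0 : ↥X)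
    intro h0
    apply hx
    apply hf
    rw [h0, map_zero]
    rfl
  obtain ⟨Z, ι, π, hZ, hsec, hne⟩ := findIndecSummand A E hart X f hf0
  have hpoint : ∀ z, π (ι z) = z := fun z => LinearMap.congr_fun hsec z
  have hπsurj : Function.Surjective π := fun z => ⟨ι z, hpoint z⟩
  have hιinj : Function.Injective ι := fun a b hab => by rw [← hpoint a, hab, hpoint b]
  refine ⟨Z, hZ, ⟨π, hπsurj⟩, ⟨π.comp f, hne⟩, ⟨g.comp ι, ?_⟩⟩
  intro hv0
  -- range ι ≤ ker g = range f
  have hSile : LinearMap.range ι ≤ LinearMap.ker g := by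
    rintro _ ⟨z, rfl⟩
    exact LinearMap.mem_ker.mpr (LinearMap.congr_fun hv0 z)
  have hSiR : LinearMap.range ι ≤ LinearMap.range f := by
    rw [hexact]; exact hSile
  set K : Submodule A ↥E := LinearMap.ker π with hK
  set R : Submodule A ↥E := LinearMap.range f with hR
  set p₁ : Submodule A ↥R := Submodule.comap R.subtype (LinearMap.range ι) with hp₁
  set p₂ : Submodule A ↥R := Submodule.comap R.subtype (K ⊓ R) with hp₂
  have hdecompK : ∀ x : ↥E, x - ι (π x) ∈ K := by
    intro x
    rw [hK, LinearMap.mem_ker, map_sub, hpoint, sub_self]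
  have hcompl : IsCompl p₁ p₂ := by
    constructor
    · rw [disjoint_iff, eq_bot_iff]
      rintro ⟨x, hxR⟩ ⟨hx1, hx2⟩
      obtain ⟨z, hz⟩ := hx1
      have hxK : x ∈ K := hx2.1
      have hz0 : z = 0 := by
        rw [← hpoint z, hz]
        exact LinearMap.mem_ker.mp hxK
      have hx0 : x = 0 := by
        have hzx : x = ι z := hz.symm
        rw [hzx, hz0, map_zero]
      simp only [Submodule.mem_bot]
      exact Subtype.ext hx0
    · rw [codisjoint_iff, eq_top_iff]
      rintro ⟨x, hxR⟩ _
      have hι_mem : ι (π x) ∈ R := hSiR ⟨π x, rfl⟩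
      have hsub_mem : x - ι (π x) ∈ R := Submodule.sub_mem R hxR hι_mem
      rw [Submodule.mem_sup]
      refine ⟨⟨ι (π x), hι_mem⟩, ⟨π x, rfl⟩, ⟨x - ι (π x), hsub_mem⟩,
        ⟨hdecompK x, hsub_mem⟩, ?_⟩
      apply Subtype.ext
      show ι (π x) + (x - ι (π x)) = x
      abel
  by_cases hp2nt : Nontrivial ↥p₂
  · -- contradicts indecomposability of X
    have hp1nt : Nontrivial ↥p₁ := by
      haveI := hZ.1
      obtain ⟨z, hz⟩ := exists_ne (0 : ↥Z)
      have hιz : ι z ≠ 0 := fun h0 => hz (by rw [← hpoint z, h0, map_zero])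
      refine nontrivial_of_ne ⟨⟨ι z, hSiR ⟨z, rfl⟩⟩, ⟨z, rfl⟩⟩ 0 ?_
      intro h0
      apply hιz
      have := congrArg (fun t : ↥p₁ => ((t : ↥R) : ↥E)) h0
      exact this
    have eX : ↥X ≃ₗ[A] ↥p₁ × ↥p₂ :=
      (LinearEquiv.ofInjective f hf).trans (Submodule.prodEquivOfIsCompl p₁ p₂ hcompl).symm
    exact (hX.2 (ModuleCat.of A ↥p₁) (ModuleCat.of A ↥p₂) hp1nt hp2nt).false eX
  · -- p₂ trivial : K ⊓ R = ⊥, construct a splitting of g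
    have hKR : K ⊓ R = ⊥ := by
      rw [eq_bot_iff]
      intro x hx
      haveI hsing := not_nontrivial_iff_subsingleton.mp hp2nt
      have hmem : (⟨x, hx.2⟩ : ↥R) ∈ p₂ := hx
      have h0 : (⟨(⟨x, hx.2⟩ : ↥R), hmem⟩ : ↥p₂) = 0 := Subsingleton.elim _ _
      have : (⟨x, hx.2⟩ : ↥R) = 0 := congrArg Subtype.val h0
      have : x = 0 := congrArg Subtype.val this
      simp [this]
    set φK : ↥K →ₗ[A] ↥N := g.comp K.subtype with hφK
    have hφinj : Function.Injective φK := by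
      rw [← LinearMap.ker_eq_bot, eq_bot_iff]
      intro x hx
      have hxk : (x : ↥E) ∈ K ⊓ R := by
        refine Submodule.mem_inf.mpr ⟨x.2, ?_⟩
        show (x : ↥E) ∈ R
        rw [hexact]
        exact LinearMap.mem_ker.mpr hx
      rw [hKR] at hxk
      simp only [Submodule.mem_bot] at hxk ⊢
      exact Subtype.ext hxk
    have hφsurj : Function.Surjective φK := by
      intro n
      obtain ⟨x, rfl⟩ := hg n
      refine ⟨⟨x - ι (π x), hdecompK x⟩, ?_⟩
      have hgι : g (ι (π x)) = 0 := LinearMap.mem_ker.mp (hSile ⟨π x, rfl⟩)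
      show g (x - ι (π x)) = g x
      rw [map_sub, hgι, sub_zero]
    set eφ := LinearEquiv.ofBijective φK ⟨hφinj, hφsurj⟩ with heφ
    apply hns (K.subtype.comp eφ.symm.toLinearMap)
    ext n
    show g (K.subtype (eφ.symm n)) = n
    have := eφ.apply_symm_apply n
    exact this

open CategoryTheory

/-- Let `C` be a torsion-free class such that every indecomposable
projective finitely generated module belongs to `L_C` (all its predecessors in
`ind A` lie in `C`). Then every indecomposable finitely generated module lies
in `C` or has injective dimension at most `1`. -/
theorem stmt14 (k : Type) [CommRing k] [IsArtinianRing k]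
    (A : Type) [Ring A] [Algebra k A] [Module.Finite k A]
    (C : Set (ModuleCat.{0} A)) (hC : IsTorsionFreeClass A C)
    (hP : ∀ P : ModuleCat.{0} A, IsIndec A P → Module.Finite A ↥P →
      Module.Projective A ↥P → ∀ Y : ModuleCat.{0} A, IsPredecessor A Y P → Y ∈ C) :
    ∀ X : ModuleCat.{0} A, IsIndec A X → Module.Finite A ↥X →
      X ∈ C ∨ idLE A 1 X := by
  intro X hX hXfg
  haveI : IsArtinianRing A := isArtinian_of_tower k inferInstance
  haveI : IsNoetherianRing k := aux_akizuki
  haveI : IsNoetherianRing A := isNoetherian_of_tower k inferInstance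
  haveI : Module.Finite A ↥X := hXfg
  -- injective envelope of X
  haveI : EnoughInjectives (ModuleCat.{0} A) := ModuleCat.enoughInjectives A
  set I : ModuleCat.{0} A := Injective.under X with hIdef
  set fI : ↥X →ₗ[A] ↥I := (Injective.ι X).hom with hfIdef
  haveI hICat : CategoryTheory.Injective (ModuleCat.of A ↥I) :=
    (inferInstance : CategoryTheory.Injective I)
  have hIinj : Module.Injective A ↥I :=
    Module.injective_module_of_injective_object A ↥I
  have hfIinj : Function.Injective fI :=
    (ModuleCat.mono_iff_injective (Injective.ι X)).mp inferInstance
  by_cases hQ : Module.Injective A ↥(ModuleCat.of A (↥I ⧸ LinearMap.range fI))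
  · right
    exact ⟨I, fI, hIinj, hfIinj, hQ⟩
  · left
    -- Baer's criterion fails for the quotient Q
    have hnotBaer : ¬ Module.Baer A (↥I ⧸ LinearMap.range fI) := fun hB => hQ hB.injective
    unfold Module.Baer at hnotBaer
    push_neg at hnotBaer
    obtain ⟨J, φ, hφ⟩ := hnotBaer
    set q : ↥I →ₗ[A] (↥I ⧸ LinearMap.range fI) := (LinearMap.range fI).mkQ with hq
    set d : (↥I × ↥J) →ₗ[A] (↥I ⧸ LinearMap.range fI) :=
      q.comp (LinearMap.fst A ↥I ↥J) - φ.comp (LinearMap.snd A ↥I ↥J) with hd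
    set E0 : Submodule A (↥I × ↥J) := LinearMap.ker d with hE0
    set E : ModuleCat.{0} A := ModuleCat.of A ↥E0 with hE
    have hmem : ∀ x : ↥X, (LinearMap.inl A ↥I ↥J).comp fI x ∈ E0 := by
      intro x
      show d (fI x, 0) = 0
      have h1 : q (fI x) = 0 := (Submodule.Quotient.mk_eq_zero _).mpr ⟨x, rfl⟩
      show q (fI x) - φ 0 = 0
      rw [h1, map_zero, sub_zero]
    set fh : ↥X →ₗ[A] ↥E0 := LinearMap.codRestrict E0 ((LinearMap.inl A ↥I ↥J).comp fI) hmem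
      with hfh
    set gh : ↥E0 →ₗ[A] ↥J := (LinearMap.snd A ↥I ↥J).comp E0.subtype with hgh
    have hfh_inj : Function.Injective fh := by
      intro a b hab
      apply hfIinj
      exact congrArg (fun y : ↥E0 => (y : ↥I × ↥J).1) hab
    have hgh_surj : Function.Surjective gh := by
      intro j
      obtain ⟨i, hi⟩ := Submodule.mkQ_surjective (LinearMap.range fI) (φ j)
      refine ⟨⟨(i, j), ?_⟩, rfl⟩
      show d (i, j) = 0
      show q i - φ j = 0
      rw [show q i = φ j from hi, sub_self]
    have hexact : LinearMap.range fh = LinearMap.ker gh := by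
      ext y
      simp only [LinearMap.mem_range, LinearMap.mem_ker]
      constructor
      · rintro ⟨x, rfl⟩
        rfl
      · intro hy
        have hy2 : (y : ↥I × ↥J).2 = 0 := hy
        have hyd : d (y : ↥I × ↥J) = 0 := y.2
        have hq0 : q (y : ↥I × ↥J).1 = 0 := by
          have : q (y : ↥I × ↥J).1 - φ (y : ↥I × ↥J).2 = 0 := hyd
          rwa [hy2, map_zero, sub_zero] at this
        obtain ⟨x, hx⟩ : (y : ↥I × ↥J).1 ∈ LinearMap.range fI :=
          (Submodule.Quotient.mk_eq_zero _).mp hq0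
        refine ⟨x, ?_⟩
        apply Subtype.ext
        apply Prod.ext
        · exact hx
        · exact hy2.symm
    have hns : ∀ s : ↥J →ₗ[A] ↥E0, gh.comp s ≠ LinearMap.id := by
      intro s hs
      set ψ : ↥J →ₗ[A] ↥I := (LinearMap.fst A ↥I ↥J).comp (E0.subtype.comp s) with hψ
      obtain ⟨Ψ, hΨ⟩ := hIinj.out J.subtype (Submodule.injective_subtype J) ψ
      obtain ⟨x, mem, hne2⟩ := hφ (q.comp Ψ)
      apply hne2
      have h1 : Ψ x = ψ ⟨x, mem⟩ := hΨ ⟨x, mem⟩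
      have h3 : gh (s ⟨x, mem⟩) = ⟨x, mem⟩ := LinearMap.congr_fun hs ⟨x, mem⟩
      have h2 : d ((s ⟨x, mem⟩ : ↥E0) : ↥I × ↥J) = 0 := (s ⟨x, mem⟩).2
      have h4 : q (ψ ⟨x, mem⟩) = φ (gh (s ⟨x, mem⟩)) := by
        have : q ((s ⟨x, mem⟩ : ↥I × ↥J)).1 - φ ((s ⟨x, mem⟩ : ↥I × ↥J)).2 = 0 := h2
        exact sub_eq_zero.mp this
      show (q.comp Ψ) x = φ ⟨x, mem⟩
      rw [LinearMap.comp_apply, h1, h4, h3]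
    -- finiteness/artinian facts
    haveI hJfin : Module.Finite A ↥J := Module.Finite.iff_fg.mpr (IsNoetherian.noetherian J)
    haveI hJart : IsArtinian A ↥J := inferInstance
    haveI hXart : IsArtinian A ↥X := inferInstance
    have hE0art : IsArtinian A ↥E0 := isArtinian_of_range_eq_ker fh gh hexact
    haveI hXnoe : IsNoetherian A ↥X := inferInstance
    haveI hJnoe : IsNoetherian A ↥J := inferInstance
    haveI hE0noe : IsNoetherian A ↥E0 := isNoetherian_of_range_eq_ker fh gh hexact
    haveI hE0fin : Module.Finite A ↥E0 := inferInstance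
    obtain ⟨Z, hZind, ⟨πE, hπE⟩, ⟨u, hu⟩, ⟨v, hv⟩⟩ :=
      mainStep A X E (ModuleCat.of A ↥J) hE0art hX fh gh hfh_inj hgh_surj hexact hns
    haveI hEfin : Module.Finite A ↥E := hE0fin
    haveI hZfin : Module.Finite A ↥Z := Module.Finite.of_surjective πE hπE
    have hvA : J.subtype.comp v ≠ 0 := by
      intro h0
      apply hv
      ext z
      have := LinearMap.congr_fun h0 z
      exact this
    obtain ⟨P, ιP, πP, hPind, hPsec, hPne⟩ :=
      findIndecSummand A (ModuleCat.of A A) (inferInstance : IsArtinian A A) Z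
        (J.subtype.comp v) hvA
    haveI hAproj : Module.Projective A ↥(ModuleCat.of A A) :=
      (inferInstance : Module.Projective A A)
    haveI hAfin : Module.Finite A ↥(ModuleCat.of A A) := (inferInstance : Module.Finite A A)
    have hPproj : Module.Projective A ↥P := Module.Projective.of_split ιP πP hPsec
    have hPsurj : Function.Surjective πP := fun p => ⟨ιP p, LinearMap.congr_fun hPsec p⟩
    haveI hPfin : Module.Finite A ↥P := Module.Finite.of_surjective πP hPsurj
    have step1 : PathStep A X Z := ⟨hX, hXfg, hZind, hZfin, u, hu⟩
    have step2 : PathStep A Z P :=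
      ⟨hZind, hZfin, hPind, hPfin, πP.comp (J.subtype.comp v), hPne⟩
    exact hP P hPind hPfin hPproj X
      ⟨hX, hXfg, Relation.ReflTransGen.head step1 (Relation.ReflTransGen.single step2)⟩
end
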